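/- arXiv:1605.04470 — 7 statements merged into one kernel-verified Lean document; each statement's English description precedes it below -/
import Mathlib

section
/- For any finite simple undirected graph G on n vertices in which every vertex has positive degree, the average over vertices of the mean degree of their neighbors is at least the average degree: (1/n) · Σ_i ( Σ_{j adjacent to i} d_j ) / d_i ≥ (1/n) · Σ_i d_i. Moreover, the inequality is strict if and only if there exist two adjacent vertices with different degrees. -/
open Finset

private lemma amgm_div (a b : ℝ) (ha : 0 < a) (hb : 0 < b) :
    2 ≤ b / a + a / b ∧ (a ≠ b → 2 < b / a + a / b) := by
  constructor
  · rw [div_add_div _ _ (ne_of_gt ha) (ne_of_gt hb), le_div_iff₀ (by positivity)]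
    nlinarith [sq_nonneg (a - b)]
  · intro hne
    rw [div_add_div _ _ (ne_of_gt ha) (ne_of_gt hb), lt_div_iff₀ (by positivity)]
    have h0 : a - b ≠ 0 := sub_ne_zero.mpr hne
    have h1 : 0 < (a - b) ^ 2 := by positivity
    nlinarith

/-- The friendship paradox for general networks: the average over vertices of the mean
degree of their neighbors is at least the average degree, with strict inequality iff
two adjacent vertices have different degrees. -/
theorem friendship_paradox_general (n : ℕ) (G : SimpleGraph (Fin n)) [DecidableRel G.Adj]
    (hd : ∀ i, 0 < G.degree i) :
    ((1 : ℝ) / n) * ∑ i, (∑ j ∈ G.neighborFinset i, (G.degree j : ℝ)) / (G.degree i : ℝ)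
      ≥ ((1 : ℝ) / n) * ∑ i, (G.degree i : ℝ)
    ∧ (((1 : ℝ) / n) * ∑ i, (∑ j ∈ G.neighborFinset i, (G.degree j : ℝ)) / (G.degree i : ℝ)
        > ((1 : ℝ) / n) * ∑ i, (G.degree i : ℝ)
      ↔ ∃ i j, G.Adj i j ∧ G.degree i ≠ G.degree j) := by
  set D : Fin n → ℝ := fun i => (G.degree i : ℝ) with hD
  have hDpos : ∀ i, 0 < D i := fun i => by simp only [hD]; exact_mod_cast hd i
  -- rewrite the LHS sum as a double sum
  have hS : ∑ i, (∑ j ∈ G.neighborFinset i, D j) / D i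
      = ∑ i, ∑ j ∈ G.neighborFinset i, D j / D i := by
    refine Finset.sum_congr rfl fun i _ => ?_
    rw [Finset.sum_div]
  -- rewrite the RHS sum as a double sum
  have hT : ∑ i, D i = ∑ i, ∑ j ∈ G.neighborFinset i, (1 : ℝ) := by
    refine Finset.sum_congr rfl fun i _ => ?_
    simp [hD, SimpleGraph.card_neighborFinset_eq_degree]
  -- swap lemma
  have swap : ∀ f : Fin n → Fin n → ℝ,
      ∑ i, ∑ j ∈ G.neighborFinset i, f i j = ∑ i, ∑ j ∈ G.neighborFinset i, f j i := by
    intro f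
    have h1 : ∀ (g : Fin n → Fin n → ℝ), ∑ i, ∑ j ∈ G.neighborFinset i, g i j
        = ∑ i, ∑ j, if G.Adj i j then g i j else 0 := by
      intro g
      refine Finset.sum_congr rfl fun i _ => ?_
      rw [SimpleGraph.neighborFinset_eq_filter, Finset.sum_filter]
    rw [h1, h1, Finset.sum_comm]
    refine Finset.sum_congr rfl fun i _ => Finset.sum_congr rfl fun j _ => ?_
    exact if_congr (G.adj_comm j i) rfl rfl
  set S := ∑ i, ∑ j ∈ G.neighborFinset i, D j / D i with hSdef
  have hdouble : ∑ i, ∑ j ∈ G.neighborFinset i, (D j / D i + D i / D j) = 2 * S := by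
    rw [two_mul]
    nth_rewrite 2 [hSdef]
    rw [swap (fun i j => D j / D i)]
    rw [← Finset.sum_add_distrib]
    refine Finset.sum_congr rfl fun i _ => ?_
    rw [← Finset.sum_add_distrib]
  have hterm : ∀ i, ∀ j ∈ G.neighborFinset i, (2 : ℝ) ≤ D j / D i + D i / D j :=
    fun i j _ => (amgm_div (D i) (D j) (hDpos i) (hDpos j)).1
  have hge : 2 * (∑ i, ∑ j ∈ G.neighborFinset i, (1:ℝ)) ≤ 2 * S := by
    rw [← hdouble, Finset.mul_sum]
    refine Finset.sum_le_sum fun i _ => ?_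
    rw [Finset.mul_sum]
    refine Finset.sum_le_sum fun j hj => by simpa using hterm i j hj
  have hiff : 2 * (∑ i, ∑ j ∈ G.neighborFinset i, (1:ℝ)) < 2 * S
      ↔ ∃ i j, G.Adj i j ∧ G.degree i ≠ G.degree j := by
    constructor
    · intro hlt
      by_contra hno
      push_neg at hno
      have heq : ∑ i, ∑ j ∈ G.neighborFinset i, (D j / D i + D i / D j)
          = ∑ i, ∑ j ∈ G.neighborFinset i, (2:ℝ) := by
        refine Finset.sum_congr rfl fun i _ => Finset.sum_congr rfl fun j hj => ?_
        have hadj : G.Adj i j := (SimpleGraph.mem_neighborFinset _ _ _).1 hj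
        have : D i = D j := by
          have := hno i j hadj
          simp [hD, this]
        rw [this, div_self (ne_of_gt (hDpos j))]; norm_num
      have h2 : ∑ i, ∑ j ∈ G.neighborFinset i, (2:ℝ)
          = 2 * ∑ i, ∑ j ∈ G.neighborFinset i, (1:ℝ) := by
        rw [Finset.mul_sum]
        exact Finset.sum_congr rfl fun i _ => by rw [Finset.mul_sum]; simp
      rw [← hdouble, heq, h2] at hlt
      exact lt_irrefl _ hlt
    · rintro ⟨i, j, hadj, hne⟩
      rw [← hdouble, Finset.mul_sum]
      refine Finset.sum_lt_sum (fun k _ => ?_) ⟨i, Finset.mem_univ i, ?_⟩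
      · rw [Finset.mul_sum]
        exact Finset.sum_le_sum fun l hl => by
          have := hterm k l hl; nlinarith
      · rw [Finset.mul_sum]
        refine Finset.sum_lt_sum (fun l hl => by have := hterm i l hl; nlinarith)
          ⟨j, (SimpleGraph.mem_neighborFinset _ _ _).2 hadj, ?_⟩
        have hne' : D i ≠ D j := by
          simp only [hD, Ne, Nat.cast_inj]; exact hne
        have := (amgm_div (D i) (D j) (hDpos i) (hDpos j)).2 hne'
        nlinarith
  have hST : ∑ i, D i ≤ S := by
    rw [hT]; linarith
  have hSTiff : (∑ i, D i < S) ↔ ∃ i j, G.Adj i j ∧ G.degree i ≠ G.degree j := by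
    rw [hT, ← hiff]
    constructor <;> intro h <;> linarith
  rcases Nat.eq_zero_or_pos n with hn | hn
  · subst hn
    constructor
    · simp
    · constructor
      · simp
      · rintro ⟨i, _⟩; exact absurd i.2 (by simp)
  · have hnpos : (0:ℝ) < 1 / n := by positivity
    rw [hS]
    constructor
    · exact mul_le_mul_of_nonneg_left hST (le_of_lt hnpos)
    · rw [← hSTiff]
      exact mul_lt_mul_iff_right₀ hnpos
end

section
/- In the linear-quadratic network game, the unique symmetric equilibrium action function x(θ, d) = θ/c + a·d·Ẽ[θ]/(c·(c − a·Ẽ[d])) satisfies the best-response fixed-point equation x(θ_i, d_i) = θ_i/c + (a·d_i/c)·Ẽ[x(θ, d)], where Ẽ[x(θ, d)] denotes the expectation of x over the joint neighbor distribution with independent marginals on θ and d. -/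
open Finset

/-- The equilibrium action function of the linear-quadratic friend game satisfies the
best-response fixed-point equation, where the expectation over a neighbor's type and
degree is taken with respect to independent finite-support marginals. -/
theorem equilibrium_fixed_point (a c : ℝ) (Sθ : Finset ℝ) (Sd : Finset ℕ)
    (wθ : ℝ → ℝ) (wd : ℕ → ℝ)
    (ha : 0 < a) (hc : 0 < c)
    (hwθ : ∑ θ ∈ Sθ, wθ θ = 1) (hwd : ∑ d ∈ Sd, wd d = 1)
    (hcd : a * (∑ d ∈ Sd, wd d * (d : ℝ)) < c)
    (θi : ℝ) (di : ℕ) :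
    θi / c + a * (di : ℝ) * (∑ θ' ∈ Sθ, wθ θ' * θ')
        / (c * (c - a * (∑ d' ∈ Sd, wd d' * (d' : ℝ))))
    = θi / c + (a * (di : ℝ) / c) *
        (∑ θ' ∈ Sθ, ∑ d' ∈ Sd, wθ θ' * wd d' *
          (θ' / c + a * (d' : ℝ) * (∑ θ'' ∈ Sθ, wθ θ'' * θ'')
            / (c * (c - a * (∑ d'' ∈ Sd, wd d'' * (d'' : ℝ)))))) := by
  set Eθ := ∑ θ' ∈ Sθ, wθ θ' * θ' with hEθ
  set Ed := ∑ d' ∈ Sd, wd d' * (d' : ℝ) with hEd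
  have hden : c - a * Ed ≠ 0 := by linarith
  have hc' : c ≠ 0 := hc.ne'
  have hsum : (∑ θ' ∈ Sθ, ∑ d' ∈ Sd, wθ θ' * wd d' *
      (θ' / c + a * (d' : ℝ) * Eθ / (c * (c - a * Ed))))
      = Eθ / c + a * Ed * Eθ / (c * (c - a * Ed)) := by
    have : ∀ θ' ∈ Sθ, (∑ d' ∈ Sd, wθ θ' * wd d' *
        (θ' / c + a * (d' : ℝ) * Eθ / (c * (c - a * Ed))))
        = wθ θ' * θ' / c + wθ θ' * (a * Ed * Eθ / (c * (c - a * Ed))) := by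
      intro θ' _
      rw [show (∑ d' ∈ Sd, wθ θ' * wd d' *
          (θ' / c + a * (d' : ℝ) * Eθ / (c * (c - a * Ed))))
          = (∑ d' ∈ Sd, wd d') * (wθ θ' * θ' / c)
            + (∑ d' ∈ Sd, wd d' * (d' : ℝ)) * (wθ θ' * (a * Eθ / (c * (c - a * Ed))))
          from by rw [sum_mul, sum_mul, ← sum_add_distrib]; apply sum_congr rfl
                  intro d' _; ring, hwd, ← hEd]
      ring
    rw [sum_congr rfl this, sum_add_distrib, ← sum_div, ← hEθ, ← sum_mul, hwθ]
    ring
  rw [hsum]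
  field_simp
  ring
end

section
/- Define x^soc(θ, d) = θ/c + a·d·E[θ]/(c·(c − a·E[d])) and x^friend(θ, d) = θ/c + a·d·E[θ]/(c·(c − a·E[d²]/E[d])). If the degree distribution has positive variance, c > a·E[d²]/E[d], a > 0, d ≥ 1, and E[θ] > 0, then x^friend(θ, d) > x^soc(θ, d) for every type θ and every degree d ≥ 1. -/
/-- The impact of the friendship paradox on behavior: with positive degree variance,
`x^friend(θ,d) > x^soc(θ,d)` for every type and degree. Here `Ed` and `Ed2` denote
the first and second moments of the degree distribution, and `Eθ` the mean type. -/
theorem friend_action_gt_soc_action (a c Ed Ed2 Eθ θ : ℝ) (d : ℕ)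
    (ha : 0 < a) (hEd : 0 < Ed) (hvar : Ed ^ 2 < Ed2)
    (hc : a * (Ed2 / Ed) < c) (hd : 1 ≤ d) (hEθ : 0 < Eθ) :
    θ / c + a * (d : ℝ) * Eθ / (c * (c - a * (Ed2 / Ed)))
      > θ / c + a * (d : ℝ) * Eθ / (c * (c - a * Ed)) := by
  have hlt : Ed < Ed2 / Ed := (lt_div_iff₀ hEd).mpr (by nlinarith)
  have hEd2pos : 0 < Ed2 / Ed := lt_trans hEd hlt
  have hcpos : 0 < c := lt_trans (by positivity) hc
  have hnum : 0 < a * (d : ℝ) * Eθ := by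
    have : (1 : ℝ) ≤ (d : ℝ) := by exact_mod_cast hd
    positivity
  have h1 : 0 < c * (c - a * (Ed2 / Ed)) := by nlinarith
  have h2 : c * (c - a * (Ed2 / Ed)) < c * (c - a * Ed) := by
    apply mul_lt_mul_of_pos_left _ hcpos
    have := mul_lt_mul_of_pos_left hlt ha
    linarith
  have := div_lt_div_of_pos_left hnum h1 h2
  linarith
end

section
/- Under the hypotheses that the degree distribution has positive variance, E[θ] > 0, a > 0, and c > a·E[d²]/E[d], the expected equilibrium action of a random neighbor strictly exceeds the population-average equilibrium action in the friend game: Ẽ[x^friend(θ, d)] > E[x^friend(θ, d)], where Ẽ takes the degree expectation under the size-biased distribution P̃(d) = d·P(d)/E[d]. -/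
open Finset

lemma aux_sum_eval (a c Eθ D S1 S2 : ℝ) (Sθ : Finset ℝ) (Sd : Finset ℕ)
    (wθ : ℝ → ℝ) (u : ℕ → ℝ)
    (hwθ : ∑ θ ∈ Sθ, wθ θ = 1) (hEθ : ∑ θ ∈ Sθ, wθ θ * θ = Eθ)
    (h1 : ∑ d ∈ Sd, u d = S1) (h2 : ∑ d ∈ Sd, u d * (d : ℝ) = S2) :
    ∑ θ ∈ Sθ, ∑ d ∈ Sd, wθ θ * u d * (θ / c + a * (d : ℝ) * Eθ / D)
      = S1 * Eθ / c + a * Eθ / D * S2 := by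
  have h : ∀ θ ∈ Sθ, ∑ d ∈ Sd, wθ θ * u d * (θ / c + a * (d : ℝ) * Eθ / D)
      = wθ θ * θ * (S1 / c) + wθ θ * (a * Eθ / D * S2) := by
    intro θ _
    rw [← h1, ← h2, Finset.sum_div, Finset.mul_sum, Finset.mul_sum, Finset.mul_sum,
      ← Finset.sum_add_distrib]
    exact Finset.sum_congr rfl fun d _ => by ring
  rw [Finset.sum_congr rfl h, Finset.sum_add_distrib, ← Finset.sum_mul, ← Finset.sum_mul,
    hEθ, hwθ]
  ring

/-- The expected equilibrium action of a random neighbor (size-biased degree weights)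
strictly exceeds the population-average equilibrium action in the friend game, when
the degree distribution has positive variance. Types are independent of degrees. -/
theorem neighbor_action_gt_average_action (a c Eθ : ℝ) (Sθ : Finset ℝ) (Sd : Finset ℕ)
    (wθ : ℝ → ℝ) (wd : ℕ → ℝ)
    (ha : 0 < a) (hEθpos : 0 < Eθ)
    (hwθ0 : ∀ θ ∈ Sθ, 0 ≤ wθ θ) (hwd0 : ∀ d ∈ Sd, 0 ≤ wd d)
    (hwθ : ∑ θ ∈ Sθ, wθ θ = 1) (hwd : ∑ d ∈ Sd, wd d = 1)
    (hEθ : ∑ θ ∈ Sθ, wθ θ * θ = Eθ)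
    (hEd : 0 < ∑ d ∈ Sd, wd d * (d : ℝ))
    (hvar : (∑ d ∈ Sd, wd d * (d : ℝ)) ^ 2 < ∑ d ∈ Sd, wd d * (d : ℝ) ^ 2)
    (hc : a * ((∑ d ∈ Sd, wd d * (d : ℝ) ^ 2) / (∑ d ∈ Sd, wd d * (d : ℝ))) < c) :
    -- Ẽ[x^friend] > E[x^friend]
    (∑ θ ∈ Sθ, ∑ d ∈ Sd, wθ θ * (wd d * (d : ℝ) / (∑ d' ∈ Sd, wd d' * (d' : ℝ))) *
        (θ / c + a * (d : ℝ) * Eθ /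
          (c * (c - a * ((∑ d' ∈ Sd, wd d' * (d' : ℝ) ^ 2) / (∑ d' ∈ Sd, wd d' * (d' : ℝ)))))))
    > ∑ θ ∈ Sθ, ∑ d ∈ Sd, wθ θ * wd d *
        (θ / c + a * (d : ℝ) * Eθ /
          (c * (c - a * ((∑ d' ∈ Sd, wd d' * (d' : ℝ) ^ 2) / (∑ d' ∈ Sd, wd d' * (d' : ℝ)))))) := by
  set Ed : ℝ := ∑ d ∈ Sd, wd d * (d : ℝ) with hEdDef
  set Ed2 : ℝ := ∑ d ∈ Sd, wd d * (d : ℝ) ^ 2 with hEd2Def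
  set D : ℝ := c * (c - a * (Ed2 / Ed)) with hD
  have hEd2pos : 0 < Ed2 := lt_trans (by positivity) hvar
  have hcpos : 0 < c := lt_trans (by positivity) hc
  have hDpos : 0 < D := by
    apply mul_pos hcpos
    linarith
  have hL : (∑ θ ∈ Sθ, ∑ d ∈ Sd, wθ θ * (wd d * (d : ℝ) / Ed) *
      (θ / c + a * (d : ℝ) * Eθ / D)) = 1 * Eθ / c + a * Eθ / D * (Ed2 / Ed) := by
    apply aux_sum_eval a c Eθ D 1 (Ed2 / Ed) Sθ Sd wθ (fun d => wd d * (d : ℝ) / Ed) hwθ hEθ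
    · rw [← Finset.sum_div]
      exact div_self hEd.ne'
    · rw [hEd2Def, Finset.sum_div]
      exact Finset.sum_congr rfl fun d _ => by ring
  have hR : (∑ θ ∈ Sθ, ∑ d ∈ Sd, wθ θ * wd d *
      (θ / c + a * (d : ℝ) * Eθ / D)) = 1 * Eθ / c + a * Eθ / D * Ed :=
    aux_sum_eval a c Eθ D 1 Ed Sθ Sd wθ wd hwθ hEθ hwd rfl
  rw [hL, hR]
  have hKpos : 0 < a * Eθ / D := by positivity
  have hgt : Ed < Ed2 / Ed := by
    rw [lt_div_iff₀ hEd]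
    nlinarith
  have := mul_lt_mul_of_pos_left hgt hKpos
  linarith
end

section
/- Fix θ and two degrees d > d'. Then the gap in equilibrium actions is larger under the friend game than the society game: x^friend(θ, d) − x^friend(θ, d') > x^soc(θ, d) − x^soc(θ, d'), where x^friend(θ, d) − x^friend(θ, d') = a·(d − d')·E[θ]/(c·(c − a·E[d²]/E[d])) and x^soc(θ, d) − x^soc(θ, d') = a·(d − d')·E[θ]/(c·(c − a·E[d])). -/
/-- Increased inequality: the gap in equilibrium actions between a higher and a lower
degree is strictly larger in the friend game than in the society game. -/
theorem friend_gap_gt_soc_gap (a c Ed Ed2 Eθ θ : ℝ) (d d' : ℕ)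
    (ha : 0 < a) (hEd : 0 < Ed) (hvar : Ed ^ 2 < Ed2)
    (hc : a * (Ed2 / Ed) < c) (hEθ : 0 < Eθ) (hd' : 1 ≤ d') (hdd : d' < d) :
    (θ / c + a * (d : ℝ) * Eθ / (c * (c - a * (Ed2 / Ed))))
      - (θ / c + a * (d' : ℝ) * Eθ / (c * (c - a * (Ed2 / Ed))))
    > (θ / c + a * (d : ℝ) * Eθ / (c * (c - a * Ed)))
      - (θ / c + a * (d' : ℝ) * Eθ / (c * (c - a * Ed))) := by
  have hX : Ed < Ed2 / Ed := (lt_div_iff₀ hEd).2 (by nlinarith)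
  have h2 : 0 < c - a * (Ed2 / Ed) := by linarith
  have h1 : 0 < c - a * Ed := by nlinarith
  have hcpos : 0 < c := by nlinarith
  have hdd' : (d' : ℝ) < d := by exact_mod_cast hdd
  have hnum : 0 < a * ((d : ℝ) - d') * Eθ := by
    apply mul_pos (mul_pos ha (by linarith)) hEθ
  have hD2 : 0 < c * (c - a * (Ed2 / Ed)) := mul_pos hcpos h2
  have hlt : c * (c - a * (Ed2 / Ed)) < c * (c - a * Ed) :=
    mul_lt_mul_of_pos_left (by nlinarith) hcpos
  have key := div_lt_div_of_pos_left hnum hD2 hlt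
  have e1 : (θ / c + a * (d : ℝ) * Eθ / (c * (c - a * (Ed2 / Ed))))
      - (θ / c + a * (d' : ℝ) * Eθ / (c * (c - a * (Ed2 / Ed))))
      = (a * ((d : ℝ) - d') * Eθ) / (c * (c - a * (Ed2 / Ed))) := by ring
  have e2 : (θ / c + a * (d : ℝ) * Eθ / (c * (c - a * Ed)))
      - (θ / c + a * (d' : ℝ) * Eθ / (c * (c - a * Ed)))
      = (a * ((d : ℝ) - d') * Eθ) / (c * (c - a * Ed)) := by ring
  rw [gt_iff_lt, e1, e2]
  exact key
end

section
/- Comparative statics of equilibrium actions: x(θ, d) = θ/c + a·d·Ẽ[θ]/(c·(c − a·m)), viewed as a function of the parameters (a, c, m), is strictly increasing in a, strictly decreasing in c, and strictly increasing in m, on the domain where θ ≥ 0, Ẽ[θ] > 0, d ≥ 1, a > 0, and c > a·m > 0. -/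
/-- The equilibrium action, viewed as a function of parameters `(a, c, m)` via
`x(a,c,m) = θ/c + a·d·Ẽ[θ]/(c·(c − a·m))`, is strictly increasing in `a`, strictly
decreasing in `c`, and strictly increasing in `m`, on the domain where `θ ≥ 0`,
`Ẽ[θ] > 0`, `d ≥ 1`, `a > 0`, and `c > a·m > 0`. -/
theorem comparative_statics (θ Eθ : ℝ) (d : ℕ)
    (hθ : 0 ≤ θ) (hEθ : 0 < Eθ) (hd : 1 ≤ d) :
    (∀ a a' c m : ℝ, 0 < a → a < a' → 0 < m → a' * m < c →
        θ / c + a * (d : ℝ) * Eθ / (c * (c - a * m))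
          < θ / c + a' * (d : ℝ) * Eθ / (c * (c - a' * m)))
    ∧ (∀ a c c' m : ℝ, 0 < a → 0 < m → a * m < c → c < c' →
        θ / c' + a * (d : ℝ) * Eθ / (c' * (c' - a * m))
          < θ / c + a * (d : ℝ) * Eθ / (c * (c - a * m)))
    ∧ (∀ a c m m' : ℝ, 0 < a → 0 < m → m < m' → a * m' < c →
        θ / c + a * (d : ℝ) * Eθ / (c * (c - a * m))
          < θ / c + a * (d : ℝ) * Eθ / (c * (c - a * m'))) := by
  have hd1 : (1 : ℝ) ≤ (d : ℝ) := by exact_mod_cast hd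
  refine ⟨?_, ?_, ?_⟩
  · intro a a' c m ha haa hm hc
    have ha' : 0 < a' := ha.trans haa
    have hd0 : (0:ℝ) < (d:ℝ) := by linarith
    have hc0 : 0 < c := lt_trans (mul_pos ha' hm) hc
    have h1 : 0 < c - a' * m := by linarith
    have h2 : 0 < c - a * m := by nlinarith
    have hden : c * (c - a' * m) < c * (c - a * m) := by
      have := mul_lt_mul_of_pos_left (mul_lt_mul_of_pos_right haa hm) hc0
      nlinarith
    have hB : a * (d : ℝ) * Eθ / (c * (c - a * m))
        < a' * (d : ℝ) * Eθ / (c * (c - a' * m)) := by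
      calc a * (d : ℝ) * Eθ / (c * (c - a * m))
          < a' * (d : ℝ) * Eθ / (c * (c - a * m)) := by
            apply div_lt_div_of_pos_right _ (by positivity)
            exact mul_lt_mul_of_pos_right (mul_lt_mul_of_pos_right haa hd0) hEθ
        _ < a' * (d : ℝ) * Eθ / (c * (c - a' * m)) := by
            exact div_lt_div_of_pos_left (mul_pos (mul_pos ha' hd0) hEθ) (by positivity) hden
    linarith
  · intro a c c' m ha hm hc hcc
    have hc0 : 0 < c := lt_trans (by positivity) hc
    have hc0' : 0 < c' := lt_trans hc0 hcc
    have h2 : 0 < c - a * m := by linarith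
    have h2' : 0 < c' - a * m := by linarith
    have hA : θ / c' ≤ θ / c := by gcongr
    have hB : a * (d : ℝ) * Eθ / (c' * (c' - a * m)) < a * (d : ℝ) * Eθ / (c * (c - a * m)) := by
      apply div_lt_div_of_pos_left (by positivity) (by positivity)
      nlinarith
    linarith
  · intro a c m m' ha hm hmm hc
    have hm'0 : 0 < m' := lt_trans hm hmm
    have hc0 : 0 < c := lt_trans (by positivity) hc
    have h1 : 0 < c - a * m' := by linarith
    have h2 : 0 < c - a * m := by nlinarith
    have hB : a * (d : ℝ) * Eθ / (c * (c - a * m)) < a * (d : ℝ) * Eθ / (c * (c - a * m')) := by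
      apply div_lt_div_of_pos_left (by positivity) (by positivity)
      have := mul_lt_mul_of_pos_left (mul_lt_mul_of_pos_left hmm ha) hc0
      nlinarith
    linarith
end

section
/- If F₁, F₂ : [0, 1] → [0, 1] are continuous and nonincreasing with F₁(π) ≤ F₂(π) for all π, and π₁*, π₂* are their respective (unique) fixed points, then π₁* ≤ π₂*. Consequently, in the best-shot game, a first-order stochastic dominance increase in the neighbor degree distribution (which pointwise lowers F) weakly lowers the equilibrium probability that a random neighbor provides the public good. -/
/-- If `F₁ ≤ F₂` pointwise on `[0,1]` for two continuous nonincreasing self-maps of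
`[0,1]`, then their (unique) fixed points are ordered: `π₁* ≤ π₂*`. -/
theorem best_shot_fixed_point_comparison (F₁ F₂ : ℝ → ℝ)
    (h1map : ∀ x ∈ Set.Icc (0 : ℝ) 1, F₁ x ∈ Set.Icc (0 : ℝ) 1)
    (h1cont : ContinuousOn F₁ (Set.Icc (0 : ℝ) 1))
    (h1anti : ∀ x ∈ Set.Icc (0 : ℝ) 1, ∀ y ∈ Set.Icc (0 : ℝ) 1, x ≤ y → F₁ y ≤ F₁ x)
    (h2map : ∀ x ∈ Set.Icc (0 : ℝ) 1, F₂ x ∈ Set.Icc (0 : ℝ) 1)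
    (h2cont : ContinuousOn F₂ (Set.Icc (0 : ℝ) 1))
    (h2anti : ∀ x ∈ Set.Icc (0 : ℝ) 1, ∀ y ∈ Set.Icc (0 : ℝ) 1, x ≤ y → F₂ y ≤ F₂ x)
    (hle : ∀ x ∈ Set.Icc (0 : ℝ) 1, F₁ x ≤ F₂ x)
    (π₁ π₂ : ℝ)
    (hπ₁ : π₁ ∈ Set.Icc (0 : ℝ) 1 ∧ F₁ π₁ = π₁)
    (hπ₂ : π₂ ∈ Set.Icc (0 : ℝ) 1 ∧ F₂ π₂ = π₂) :
    π₁ ≤ π₂ := by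
  obtain ⟨hm1, hf1⟩ := hπ₁
  obtain ⟨hm2, hf2⟩ := hπ₂
  by_contra h
  push_neg at h
  have h1 : F₁ π₁ ≤ F₂ π₁ := hle π₁ hm1
  have h2 : F₂ π₁ ≤ F₂ π₂ := h2anti π₂ hm2 π₁ hm1 h.le
  linarith
end
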